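/- Let X be an affine finite space. Then the direct limit (colimit) of the schemes Spec O_x over x ∈ X, i.e. the ringed space Spec O_X := colim_{x∈X} Spec O_x, is homeomorphic to Spec O(X), and its structure sheaf is the structure sheaf of the affine scheme Spec O(X). -/

import Mathlib

open scoped TensorProduct

set_option maxHeartbeats 1000000
set_option synthInstance.maxHeartbeats 400000

/-- A finite ringed space, encoded combinatorially: a finite preordered set `X` (the topology is
the Alexandrov topology whose open sets are the upper sets, and `U_x = Set.Ici x` is the minimal
open neighbourhood of `x`), a commutative ring `O x` at each point (the stalk,
`O x = O(U_x)`), and compatible restriction ring homomorphisms. -/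
structure FRS : Type 1 where
  X : Type
  [fin : Finite X]
  [ord : Preorder X]
  O : X → Type
  [ring : ∀ x, CommRing (O x)]
  res : ∀ {x y : X}, x ≤ y → O x →+* O y
  res_refl : ∀ x : X, res (le_refl x) = RingHom.id (O x)
  res_trans : ∀ {x y z : X} (h₁ : x ≤ y) (h₂ : y ≤ z),
      (res h₂).comp (res h₁) = res (h₁.trans h₂)

attribute [instance] FRS.fin FRS.ord FRS.ring

namespace FRS

variable (S : FRS)

/-- The sections of the structure sheaf over a subset `U` (intended: an open, i.e. upper, set):
compatible families of stalk elements. -/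
def sect (U : Set S.X) : Subring (∀ z : U, S.O z.1) where
  carrier := { s | ∀ ⦃z w : U⦄ (h : z.1 ≤ w.1), S.res h (s z) = s w }
  zero_mem' := by intro z w h; simp
  one_mem' := by intro z w h; simp
  add_mem' := by
    intro a b ha hb z w h
    simp only [Pi.add_apply, map_add, ha h, hb h]
  mul_mem' := by
    intro a b ha hb z w h
    simp only [Pi.mul_apply, map_mul, ha h, hb h]
  neg_mem' := by
    intro a ha z w h
    simp only [Pi.neg_apply, map_neg, ha h]

/-- The ring of sections over `U`. -/
abbrev Gamma (U : Set S.X) : Type := ↥(S.sect U)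

/-- Evaluation of a section at a point of `U` (restriction to the stalk). -/
def ev {U : Set S.X} (x : S.X) (hx : x ∈ U) : S.Gamma U →+* S.O x :=
  (Pi.evalRingHom _ (⟨x, hx⟩ : U)).comp (S.sect U).subtype

/-- Restriction of global sections to the stalk at `x`. -/
def toStalk (x : S.X) : S.Gamma Set.univ →+* S.O x :=
  S.ev x (Set.mem_univ x)

/-- The canonical morphism `O(X) → ∏ₓ O_x`. -/
def toProd : S.Gamma Set.univ →+* ∀ x : S.X, S.O x :=
  Pi.ringHom fun x => S.toStalk x

/-- Restriction of sections along an inclusion of subsets. -/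
def resSect {U V : Set S.X} (h : V ⊆ U) : S.Gamma U →+* S.Gamma V where
  toFun s := ⟨fun z => (s : ∀ z : U, S.O z.1) ⟨z.1, h z.2⟩,
    fun z w hzw => s.2 (z := ⟨z.1, h z.2⟩) (w := ⟨w.1, h w.2⟩) hzw⟩
  map_one' := rfl
  map_mul' _ _ := rfl
  map_zero' := rfl
  map_add' _ _ := rfl

/-- The canonical map from the stalk at `x` to the sections over a subset of `U_x = Ici x`. -/
def stalkSect {x : S.X} {U : Set S.X} (hU : U ⊆ Set.Ici x) : S.O x →+* S.Gamma U where
  toFun a := ⟨fun z => S.res (hU z.2) a, by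
    intro z w h
    have := RingHom.congr_fun (S.res_trans (hU z.2) h) a
    simpa using this⟩
  map_one' := by ext z; simp
  map_mul' a b := by ext z; simp
  map_zero' := by ext z; simp
  map_add' a b := by ext z; simp

/-- The canonical morphism `O(U) → ∏_{z ∈ U} O_z`. -/
def sectToProd (U : Set S.X) : S.Gamma U →+* ∀ z : U, S.O z.1 :=
  (S.sect U).subtype

/-- Each stalk is an algebra over the ring of global sections. -/
noncomputable instance globAlgebra (x : S.X) : Algebra (S.Gamma Set.univ) (S.O x) :=
  (S.toStalk x).toAlgebra

/-- The sections over any subset form an algebra over the ring of global sections. -/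
noncomputable instance gammaAlgebra (U : Set S.X) :
    Algebra (S.Gamma Set.univ) (S.Gamma U) :=
  (S.resSect (Set.subset_univ U)).toAlgebra

end FRS

/-- A ring homomorphism is faithfully flat if it makes the target into a faithfully flat module
over the source. -/
def RingHom.IsFaithfullyFlatHom {A B : Type*} [CommRing A] [CommRing B] (f : A →+* B) : Prop :=
  @Module.FaithfullyFlat A B _ _ (Module.compHom B f)

/-- A ring homomorphism is flat if it makes the target into a flat module over the source. -/
def RingHom.IsFlatHom {A B : Type*} [CommRing A] [CommRing B] (f : A →+* B) : Prop :=
  @Module.Flat A B _ _ (Module.compHom B f)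

namespace FRS

variable (S : FRS)

/-- `X` is an affine finite space: (1) `O(X) → ∏ₓ O_x` is faithfully flat; (2) the natural map
`O_x ⊗_{O(X)} O_y → O(U_x ∩ U_y)` (characterized on simple tensors) is an isomorphism;
(3) `O(U_x ∩ U_y) → ∏_{z ∈ U_x ∩ U_y} O_z` is faithfully flat. -/
def IsAffine : Prop :=
  S.toProd.IsFaithfullyFlatHom ∧
  (∀ x y : S.X,
    ∀ ψ : ((S.O x) ⊗[S.Gamma Set.univ] (S.O y)) →+* S.Gamma (Set.Ici x ∩ Set.Ici y),
      (∀ (a : S.O x) (b : S.O y) (z : ↥(Set.Ici x ∩ Set.Ici y)),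
        ((ψ (a ⊗ₜ b)) : ∀ w : ↥(Set.Ici x ∩ Set.Ici y), S.O w.1) z
          = S.res z.2.1 a * S.res z.2.2 b) →
      Function.Bijective ψ) ∧
  (∀ x y : S.X, (S.sectToProd (Set.Ici x ∩ Set.Ici y)).IsFaithfullyFlatHom)

/-- The open (= upper) subset `U`, as a finite ringed space in its own right. -/
noncomputable def restrict (U : Set S.X) : FRS where
  X := ↥U
  fin := inferInstance
  ord := inferInstance
  O := fun u => S.O u.1
  ring := fun _ => inferInstance
  res := fun h => S.res h
  res_refl := fun u => S.res_refl u.1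
  res_trans := fun h₁ h₂ => S.res_trans h₁ h₂

/-- An affine open subset. -/
def IsAffineOpen (U : Set S.X) : Prop :=
  IsUpperSet U ∧ (S.restrict U).IsAffine

/-- A schematic finite space: every minimal open set `U_x` is affine. -/
def IsSchematic : Prop :=
  ∀ x : S.X, (S.restrict (Set.Ici x)).IsAffine

end FRS

namespace FRS

variable (S : FRS)

/-- The identification relation on `∐ₓ Spec O_x`: for `x ≤ y`, a prime of `O_y` is identified
with its preimage in `O_x`. -/
def specRel : (Σ x : S.X, PrimeSpectrum (S.O x)) → (Σ x : S.X, PrimeSpectrum (S.O x)) → Prop :=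
  fun a b => ∃ h : a.1 ≤ b.1, PrimeSpectrum.comap (S.res h) b.2 = a.2

/-- `Spec O_X := colim_{x ∈ X} Spec O_x`, as a topological space: the quotient of the disjoint
union of the `Spec O_x` by the identifications along the (flat monomorphism) transition maps. -/
def SpecColim : Type := Quot S.specRel

instance : TopologicalSpace S.SpecColim :=
  instTopologicalSpaceQuot

/-- The canonical comparison map `colimₓ Spec O_x → Spec O(X)`. -/
def specToSpecGlobal : S.SpecColim → PrimeSpectrum (S.Gamma Set.univ) :=
  Quot.lift (fun a => PrimeSpectrum.comap (S.toStalk a.1) a.2) (by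
    rintro a b ⟨h, hq⟩
    try dsimp only
    rw [← hq, ← PrimeSpectrum.comap_comp_apply]
    have key : (S.res h).comp (S.toStalk a.1) = S.toStalk b.1 :=
      RingHom.ext fun s => s.2 (z := ⟨a.1, trivial⟩) (w := ⟨b.1, trivial⟩) h
    rw [key])


end FRS

section Generic0

section Generic
variable {A B : Type*} [CommRing A] [CommRing B]

/-- Primes of a finite product of rings come from a factor. -/
lemma pi_prime_exists {ι : Type*} [Finite ι] (O : ι → Type*) [∀ i, CommRing (O i)]
    (Q : PrimeSpectrum (∀ i, O i)) :
    ∃ (i : ι) (r : PrimeSpectrum (O i)), PrimeSpectrum.comap (Pi.evalRingHom O i) r = Q := by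
  cases nonempty_fintype ι
  classical
  have h1 : ∃ i, (Pi.single i 1 : ∀ i, O i) ∉ Q.asIdeal := by
    by_contra hc
    push_neg at hc
    have h2 : (1 : ∀ i, O i) ∈ Q.asIdeal := by
      have : (1 : ∀ i, O i) = ∑ i, Pi.single i 1 := by
        funext j
        simp [Finset.sum_apply, Pi.single_apply]
      rw [this]
      exact Ideal.sum_mem _ fun i _ => hc i
    exact Q.2.ne_top (Q.asIdeal.eq_top_iff_one.mpr h2)
  obtain ⟨i, hi⟩ := h1
  have hsurj : Function.Surjective (Pi.evalRingHom O i) := Function.surjective_eval i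
  have hker : ∀ a, (Pi.evalRingHom O i) a = 0 → a ∈ Q.asIdeal := by
    intro a ha
    have hz : a * Pi.single i 1 = 0 := by
      funext j
      by_cases hj : j = i
      · subst hj; simpa using ha
      · simp [Pi.single_apply, hj]
    rcases Q.2.mem_or_mem (show a * Pi.single i 1 ∈ Q.asIdeal by rw [hz]; exact Q.asIdeal.zero_mem)
      with h | h
    · exact h
    · exact absurd h hi
  haveI hprime : (Q.asIdeal.map (Pi.evalRingHom O i)).IsPrime :=
    Ideal.map_isPrime_of_surjective hsurj fun a ha => hker a ha
  refine ⟨i, ⟨_, hprime⟩, PrimeSpectrum.ext ?_⟩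
  show Ideal.comap _ (Ideal.map _ _) = Q.asIdeal
  apply le_antisymm
  · intro b hb
    rw [Ideal.mem_comap, Ideal.mem_map_iff_of_surjective _ hsurj] at hb
    obtain ⟨a, ha, hab⟩ := hb
    have hba : b - a ∈ Q.asIdeal := hker _ (by simp [map_sub, hab])
    simpa using Q.asIdeal.add_mem hba ha
  · exact Ideal.le_comap_map

/-- Spec of a faithfully flat ring map is surjective. -/
lemma exists_comap_eq_of_faithfullyFlat (f : A →+* B)
    (hf : @Module.FaithfullyFlat A B _ _ (Module.compHom B f)) (q : PrimeSpectrum A) :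
    ∃ p : PrimeSpectrum B, PrimeSpectrum.comap f p = q := by
  letI : Algebra A B := f.toAlgebra
  haveI : Module.FaithfullyFlat A B := hf
  letI L := Localization.AtPrime q.asIdeal
  letI κ := IsLocalRing.ResidueField L
  letI : Algebra A κ := ((IsLocalRing.residue L).comp (algebraMap A L)).toAlgebra
  letI : Module A κ := Algebra.toModule
  haveI : Nontrivial (κ ⊗[A] B) := Module.FaithfullyFlat.rTensor_nontrivial A B κ
  obtain ⟨m, hm⟩ := Ideal.exists_maximal (κ ⊗[A] B)
  haveI := hm.isPrime
  refine ⟨⟨Ideal.comap (Algebra.TensorProduct.includeRight : B →ₐ[A] κ ⊗[A] B).toRingHom m,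
    Ideal.IsPrime.comap _⟩, PrimeSpectrum.ext ?_⟩
  show Ideal.comap f (Ideal.comap _ m) = q.asIdeal
  rw [Ideal.comap_comap]
  have key : ((Algebra.TensorProduct.includeRight : B →ₐ[A] κ ⊗[A] B).toRingHom).comp f
      = (Algebra.TensorProduct.includeLeftRingHom (R := A) (A := κ) (B := B)).comp
        (algebraMap A κ) := by
    ext a
    show (1 : κ) ⊗ₜ[A] (f a) = (algebraMap A κ a) ⊗ₜ[A] (1 : B)
    have h1 : f a = a • (1 : B) := by
      rw [Algebra.smul_def, mul_one]; rfl
    have h2 : algebraMap A κ a = a • (1 : κ) := by rw [Algebra.smul_def, mul_one]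
    rw [h1, h2, ← TensorProduct.smul_tmul]
  rw [key, ← Ideal.comap_comap]
  have hbot : Ideal.comap (Algebra.TensorProduct.includeLeftRingHom (R := A) (A := κ) (B := B)) m
      = ⊥ := by
    haveI : (Ideal.comap (Algebra.TensorProduct.includeLeftRingHom (R := A) (A := κ) (B := B))
        m).IsPrime := Ideal.IsPrime.comap _
    exact Ideal.eq_bot_of_prime _
  rw [hbot]
  show Ideal.comap ((IsLocalRing.residue L).comp (algebraMap A L)) ⊥ = q.asIdeal
  rw [← RingHom.ker_eq_comap_bot, ← RingHom.comap_ker, IsLocalRing.ker_residue]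
  exact Localization.AtPrime.under_maximalIdeal

end Generic

/-- A faithfully flat epimorphism-like map (tensor-commuting) is bijective. -/
lemma faithfullyFlat_epi_bijective {R T : Type*} [CommRing R] [CommRing T] [Algebra R T]
    [Module.FaithfullyFlat R T]
    (h : ∀ t : T, t ⊗ₜ[R] (1 : T) = 1 ⊗ₜ[R] t) :
    Function.Bijective (algebraMap R T) := by
  constructor
  · -- injectivity
    have hker : LinearMap.lTensor T (LinearMap.ker (Algebra.linearMap R T)).subtype = 0 := by
      apply TensorProduct.ext'
      intro t n
      have hn : (n : R) • t = 0 := by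
        rw [Algebra.smul_def]
        have h0 : algebraMap R T (n : R) = 0 := n.2
        rw [h0, zero_mul]
      show t ⊗ₜ[R] ((n : R) : R) = 0
      calc t ⊗ₜ[R] ((n : R) : R) = t ⊗ₜ[R] ((n : R) • (1 : R)) := by rw [smul_eq_mul, mul_one]
        _ = ((n : R) • t) ⊗ₜ[R] (1 : R) := by rw [TensorProduct.smul_tmul]
        _ = 0 := by rw [hn, TensorProduct.zero_tmul]
    have hbot : LinearMap.ker (Algebra.linearMap R T) = ⊥ := by
      have := (Module.FaithfullyFlat.zero_iff_lTensor_zero (R := R) (M := T)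
        (LinearMap.ker (Algebra.linearMap R T)).subtype).mpr hker
      ext x
      simp only [Submodule.mem_bot]
      constructor
      · intro hx
        have := congrArg (fun (g : _ →ₗ[R] R) => g ⟨x, hx⟩) this
        simpa using this
      · rintro rfl; exact (LinearMap.ker _).zero_mem
    intro a b hab
    have : a - b ∈ LinearMap.ker (Algebra.linearMap R T) := by
      simp only [LinearMap.mem_ker, Algebra.linearMap_apply, map_sub, hab, sub_self]
    rw [hbot, Submodule.mem_bot, sub_eq_zero] at this
    exact this
  · -- surjectivity
    set rng := LinearMap.range (Algebra.linearMap R T) with hrng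
    have hzero : LinearMap.lTensor T rng.mkQ = 0 := by
      apply TensorProduct.ext'
      intro t₁ t₂
      have key : (t₁ ⊗ₜ[R] t₂ : T ⊗[R] T) = (t₁ * t₂) ⊗ₜ[R] 1 := by
        calc t₁ ⊗ₜ[R] t₂ = (t₁ ⊗ₜ[R] 1) * (1 ⊗ₜ[R] t₂) := by
              rw [Algebra.TensorProduct.tmul_mul_tmul, mul_one, one_mul]
          _ = (t₁ ⊗ₜ[R] 1) * (t₂ ⊗ₜ[R] 1) := by rw [← h t₂]
          _ = (t₁ * t₂) ⊗ₜ[R] 1 := by rw [Algebra.TensorProduct.tmul_mul_tmul, mul_one]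
      show LinearMap.lTensor T rng.mkQ (t₁ ⊗ₜ[R] t₂) = 0
      rw [key]
      have h1 : rng.mkQ (1 : T) = 0 := by
        rw [Submodule.mkQ_apply, Submodule.Quotient.mk_eq_zero]
        exact ⟨1, by simp [Algebra.linearMap_apply, map_one]⟩
      rw [LinearMap.lTensor_tmul, h1, TensorProduct.tmul_zero]
    have hsub : Subsingleton (T ⊗[R] (T ⧸ rng)) := by
      constructor
      intro a b
      obtain ⟨a', rfl⟩ := LinearMap.lTensor_surjective T rng.mkQ_surjective a
      obtain ⟨b', rfl⟩ := LinearMap.lTensor_surjective T rng.mkQ_surjective b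
      rw [hzero]; rfl
    haveI := hsub
    haveI : Subsingleton (T ⧸ rng) :=
      Module.FaithfullyFlat.lTensor_reflects_triviality R T (T ⧸ rng)
    have : rng = ⊤ := Submodule.Quotient.subsingleton_iff.mp this
    intro t
    have ht : t ∈ rng := this ▸ Submodule.mem_top
    obtain ⟨r, hr⟩ := ht
    exact ⟨r, hr⟩

section GoingDown
variable {A B : Type*} [CommRing A] [CommRing B] [Algebra A B]

/-- Flat algebras satisfy going-down. -/
lemma exists_le_comap_eq_of_flat [Module.Flat A B] (p' : PrimeSpectrum B) (q : PrimeSpectrum A)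
    (hle : q.asIdeal ≤ Ideal.comap (algebraMap A B) p'.asIdeal) :
    ∃ p : PrimeSpectrum B, p.asIdeal ≤ p'.asIdeal ∧
      PrimeSpectrum.comap (algebraMap A B) p = q := by
  set q' : PrimeSpectrum A := PrimeSpectrum.comap (algebraMap A B) p' with hq'
  letI D := Localization.AtPrime p'.asIdeal
  letI Aq := Localization.AtPrime q'.asIdeal
  haveI : Module.Flat A D := Module.Flat.trans A B D
  set ℓ := Localization.localRingHom q'.asIdeal p'.asIdeal (algebraMap A B) rfl with hℓ
  letI : Algebra Aq D := ℓ.toAlgebra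
  haveI : IsScalarTower A Aq D :=
    IsScalarTower.of_algebraMap_eq fun a => by
      rw [IsScalarTower.algebraMap_apply A B D]
      exact (Localization.localRingHom_to_map q'.asIdeal p'.asIdeal (algebraMap A B) rfl a).symm
  haveI : IsLocalizedModule q'.asIdeal.primeCompl (LinearMap.id (R := A) (M := D)) :=
    isLocalizedModule_id q'.asIdeal.primeCompl D Aq
  haveI : Module.Flat Aq D :=
    Module.Flat.of_isLocalizedModule (Rp := Aq) q'.asIdeal.primeCompl (LinearMap.id : D →ₗ[A] D)
  haveI hloc : IsLocalHom ℓ := Localization.isLocalHom_localRingHom q'.asIdeal p'.asIdeal (algebraMap A B) rfl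
  haveI hff : Module.FaithfullyFlat Aq D := by
    rw [Module.FaithfullyFlat.iff_flat_and_proper_ideal]
    refine ⟨inferInstance, fun I hI hIT => ?_⟩
    rw [Ideal.smul_top_eq_map] at hIT
    have h1 : (1 : D) ∈ (Ideal.map (algebraMap Aq D) I).restrictScalars Aq := by
      rw [hIT]; trivial
    have h1' : (1 : D) ∈ Ideal.map (algebraMap Aq D) I := h1
    have hle2 : Ideal.map (algebraMap Aq D) I ≤ IsLocalRing.maximalIdeal D := by
      rw [Ideal.map_le_iff_le_comap]
      intro a ha
      show ℓ a ∈ IsLocalRing.maximalIdeal D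
      rw [IsLocalRing.mem_maximalIdeal]
      intro hu
      have : IsUnit a := hloc.map_nonunit a hu
      exact hI (Ideal.eq_top_of_isUnit_mem _ ha this)
    exact (IsLocalRing.maximalIdeal D).ne_top_iff_one.mp
      (Ideal.IsMaximal.ne_top (IsLocalRing.maximalIdeal.isMaximal D)) (hle2 h1')
  have hdisj : Disjoint (q'.asIdeal.primeCompl : Set A) (q.asIdeal : Set A) := by
    rw [Set.disjoint_iff]
    rintro a ⟨ha1, ha2⟩
    exact (ha1 (hle ha2)).elim
  haveI hQp : (Ideal.map (algebraMap A Aq) q.asIdeal).IsPrime :=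
    IsLocalization.isPrime_of_isPrime_disjoint q'.asIdeal.primeCompl Aq q.asIdeal q.2 hdisj
  obtain ⟨P, hP⟩ := exists_comap_eq_of_faithfullyFlat (algebraMap Aq D) hff
    ⟨Ideal.map (algebraMap A Aq) q.asIdeal, hQp⟩
  refine ⟨PrimeSpectrum.comap (algebraMap B D) P, ?_, ?_⟩
  · intro b hb
    by_contra hbp
    have hu : IsUnit (algebraMap B D b) :=
      IsLocalization.map_units D (⟨b, hbp⟩ : p'.asIdeal.primeCompl)
    exact P.2.ne_top (Ideal.eq_top_of_isUnit_mem _ hb hu)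
  · apply PrimeSpectrum.ext
    show Ideal.comap (algebraMap A B) (Ideal.comap (algebraMap B D) P.asIdeal) = q.asIdeal
    rw [Ideal.comap_comap, ← IsScalarTower.algebraMap_eq A B D,
      IsScalarTower.algebraMap_eq A Aq D, ← Ideal.comap_comap]
    have hPQ : Ideal.comap (algebraMap Aq D) P.asIdeal
        = Ideal.map (algebraMap A Aq) q.asIdeal := congrArg PrimeSpectrum.asIdeal hP
    rw [hPQ]
    exact IsLocalization.comap_map_of_isPrime_disjoint q'.asIdeal.primeCompl Aq q.2 hdisj

end GoingDown
section FlatEpi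
variable {A B : Type*} [CommRing A] [CommRing B] [Algebra A B]

lemma flat_epi_localization_bijective [Module.Flat A B]
    (h : ∀ t : B, t ⊗ₜ[A] (1 : B) = 1 ⊗ₜ[A] t) (p' : PrimeSpectrum B) :
    Function.Bijective (Localization.localRingHom
      (Ideal.comap (algebraMap A B) p'.asIdeal) p'.asIdeal (algebraMap A B) rfl) := by
  set q' : PrimeSpectrum A := PrimeSpectrum.comap (algebraMap A B) p' with hq'
  letI D := Localization.AtPrime p'.asIdeal
  letI Aq := Localization.AtPrime q'.asIdeal
  haveI : Module.Flat A D := Module.Flat.trans A B D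
  set ℓ := Localization.localRingHom q'.asIdeal p'.asIdeal (algebraMap A B) rfl with hℓ
  letI : Algebra Aq D := ℓ.toAlgebra
  haveI : IsScalarTower A Aq D :=
    IsScalarTower.of_algebraMap_eq fun a => by
      rw [IsScalarTower.algebraMap_apply A B D]
      exact (Localization.localRingHom_to_map q'.asIdeal p'.asIdeal (algebraMap A B) rfl a).symm
  haveI : IsLocalizedModule q'.asIdeal.primeCompl (LinearMap.id (R := A) (M := D)) :=
    isLocalizedModule_id q'.asIdeal.primeCompl D Aq
  haveI : Module.Flat Aq D :=
    Module.Flat.of_isLocalizedModule (Rp := Aq) q'.asIdeal.primeCompl (LinearMap.id : D →ₗ[A] D)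
  haveI hloc : IsLocalHom ℓ :=
    Localization.isLocalHom_localRingHom q'.asIdeal p'.asIdeal (algebraMap A B) rfl
  haveI hff : Module.FaithfullyFlat Aq D := by
    rw [Module.FaithfullyFlat.iff_flat_and_proper_ideal]
    refine ⟨inferInstance, fun I hI hIT => ?_⟩
    rw [Ideal.smul_top_eq_map] at hIT
    have h1 : (1 : D) ∈ (Ideal.map (algebraMap Aq D) I).restrictScalars Aq := by
      rw [hIT]; trivial
    have h1' : (1 : D) ∈ Ideal.map (algebraMap Aq D) I := h1
    have hle2 : Ideal.map (algebraMap Aq D) I ≤ IsLocalRing.maximalIdeal D := by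
      rw [Ideal.map_le_iff_le_comap]
      intro a ha
      show ℓ a ∈ IsLocalRing.maximalIdeal D
      rw [IsLocalRing.mem_maximalIdeal]
      intro hu
      exact hI (Ideal.eq_top_of_isUnit_mem _ ha (hloc.map_nonunit a hu))
    exact (IsLocalRing.maximalIdeal D).ne_top_iff_one.mp
      (Ideal.IsMaximal.ne_top (IsLocalRing.maximalIdeal.isMaximal D)) (hle2 h1')
  -- now transfer the tensor-commutation to D over Aq
  have hcomm : ∀ t : D, t ⊗ₜ[Aq] (1 : D) = 1 ⊗ₜ[Aq] t := by
    have kk : ((Algebra.TensorProduct.includeLeft : D →ₐ[Aq] D ⊗[Aq] D) : D →+* D ⊗[Aq] D)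
        = ((Algebra.TensorProduct.includeRight : D →ₐ[Aq] D ⊗[Aq] D) : D →+* D ⊗[Aq] D) := by
      apply IsLocalization.ringHom_ext p'.asIdeal.primeCompl
      ext b
      show (algebraMap B D b) ⊗ₜ[Aq] (1 : D) = 1 ⊗ₜ[Aq] (algebraMap B D b)
      -- build a ring hom Φ : B ⊗[A] B →ₐ[A] D ⊗[Aq] D and apply to h b
      let φ₁ : B →ₐ[A] D ⊗[Aq] D :=
        { toRingHom := ((Algebra.TensorProduct.includeLeft :
            D →ₐ[Aq] D ⊗[Aq] D) : D →+* D ⊗[Aq] D).comp (algebraMap B D)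
          commutes' := fun a => by
            show (algebraMap B D (algebraMap A B a)) ⊗ₜ[Aq] (1 : D) = algebraMap A (D ⊗[Aq] D) a
            rw [IsScalarTower.algebraMap_apply A Aq (D ⊗[Aq] D) a,
              Algebra.TensorProduct.algebraMap_apply]
            congr 1
            exact (Localization.localRingHom_to_map q'.asIdeal p'.asIdeal
              (algebraMap A B) rfl a).symm }
      let φ₂ : B →ₐ[A] D ⊗[Aq] D :=
        { toRingHom := ((Algebra.TensorProduct.includeRight :
            D →ₐ[Aq] D ⊗[Aq] D) : D →+* D ⊗[Aq] D).comp (algebraMap B D)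
          commutes' := fun a => by
            show (1 : D) ⊗ₜ[Aq] (algebraMap B D (algebraMap A B a)) = algebraMap A (D ⊗[Aq] D) a
            rw [IsScalarTower.algebraMap_apply A Aq (D ⊗[Aq] D) a,
              Algebra.TensorProduct.algebraMap_apply]
            rw [show algebraMap B D (algebraMap A B a) = algebraMap Aq D (algebraMap A Aq a) from
              (Localization.localRingHom_to_map q'.asIdeal p'.asIdeal
                (algebraMap A B) rfl a).symm]
            rw [Algebra.algebraMap_eq_smul_one (R := Aq) (A := D) (algebraMap A Aq a),
              TensorProduct.tmul_smul, TensorProduct.smul_tmul'] }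
      let Φ := Algebra.TensorProduct.productMap φ₁ φ₂
      have := congrArg Φ (h b)
      rwa [Algebra.TensorProduct.productMap_left_apply,
        Algebra.TensorProduct.productMap_right_apply] at this
    intro t
    exact RingHom.congr_fun kk t
  exact faithfullyFlat_epi_bijective hcomm

end FlatEpi

end Generic0

namespace FRS

variable (S : FRS)

/-- `stalkSect` as an algebra hom over global sections. -/
noncomputable def stalkSectAlg (x : S.X) {U : Set S.X} (hU : U ⊆ Set.Ici x) :
    S.O x →ₐ[S.Gamma Set.univ] S.Gamma U :=
  { S.stalkSect hU with
    commutes' := fun s => Subtype.ext (funext fun z =>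
      s.2 (z := ⟨x, trivial⟩) (w := ⟨z.1, trivial⟩) (hU z.2)) }

@[simp] lemma stalkSectAlg_toRingHom (x : S.X) {U : Set S.X} (hU : U ⊆ Set.Ici x) :
    ((S.stalkSectAlg x hU) : S.O x →+* S.Gamma U) = S.stalkSect hU := rfl

/-- The canonical map `O_x ⊗ O_y → O(U_x ∩ U_y)`. -/
noncomputable def psi (x y : S.X) :
    (S.O x) ⊗[S.Gamma Set.univ] (S.O y) →ₐ[S.Gamma Set.univ]
      S.Gamma (Set.Ici x ∩ Set.Ici y) :=
  Algebra.TensorProduct.productMap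
    (S.stalkSectAlg x Set.inter_subset_left)
    (S.stalkSectAlg y Set.inter_subset_right)

lemma psi_bijective (hS : S.IsAffine) (x y : S.X) :
    Function.Bijective (S.psi x y).toRingHom :=
  hS.2.1 x y (S.psi x y).toRingHom (fun _ _ _ => rfl)

lemma tmul_comm (hS : S.IsAffine) (x : S.X) (t : S.O x) :
    t ⊗ₜ[S.Gamma Set.univ] (1 : S.O x) = (1 : S.O x) ⊗ₜ[S.Gamma Set.univ] t := by
  have hb := S.psi_bijective hS x x
  refine hb.injective ?_
  show S.psi x x (t ⊗ₜ 1) = S.psi x x (1 ⊗ₜ t)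
  unfold psi
  rw [Algebra.TensorProduct.productMap_left_apply, Algebra.TensorProduct.productMap_right_apply]

lemma flat_toStalk (hS : S.IsAffine) (x : S.X) :
    Module.Flat (S.Gamma Set.univ) (S.O x) := by
  haveI hFF : Module.FaithfullyFlat (S.Gamma Set.univ) (∀ y, S.O y) := hS.1
  classical
  haveI := Fintype.ofFinite S.X
  exact Module.Flat.of_retract (R := S.Gamma Set.univ) (M := ∀ y, S.O y) (N := S.O x)
    (i := LinearMap.single _ _ x) (r := LinearMap.proj x) (by ext a; simp)

lemma toStalk_eq (x : S.X) :
    S.toStalk x = (Pi.evalRingHom S.O x).comp S.toProd := rfl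

lemma exists_point (hS : S.IsAffine) (q : PrimeSpectrum (S.Gamma Set.univ)) :
    ∃ (x : S.X) (p : PrimeSpectrum (S.O x)), PrimeSpectrum.comap (S.toStalk x) p = q := by
  obtain ⟨P, hP⟩ := exists_comap_eq_of_faithfullyFlat S.toProd hS.1 q
  obtain ⟨x, r, hr⟩ := pi_prime_exists S.O P
  refine ⟨x, r, ?_⟩
  rw [toStalk_eq, PrimeSpectrum.comap_comp_apply, hr, hP]

end FRS


lemma ker_residue_comp (R : Type*) [CommRing R] (I : Ideal R) [I.IsPrime] :
    Ideal.comap ((IsLocalRing.residue (Localization.AtPrime I)).comp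
      (algebraMap R (Localization.AtPrime I))) (⊥ : Ideal (IsLocalRing.ResidueField (Localization.AtPrime I))) = I := by
  rw [← RingHom.ker_eq_comap_bot, ← RingHom.comap_ker, IsLocalRing.ker_residue]
  exact Localization.AtPrime.under_maximalIdeal

namespace FRS
variable (S : FRS)

lemma zigzag (hS : S.IsAffine) {x y : S.X} (p : PrimeSpectrum (S.O x))
    (p' : PrimeSpectrum (S.O y))
    (h : PrimeSpectrum.comap (S.toStalk x) p = PrimeSpectrum.comap (S.toStalk y) p') :
    ∃ (z : S.X) (hx : x ≤ z) (hy : y ≤ z) (r : PrimeSpectrum (S.O z)),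
      PrimeSpectrum.comap (S.res hx) r = p ∧ PrimeSpectrum.comap (S.res hy) r = p' := by
  classical
  set q : PrimeSpectrum (S.Gamma Set.univ) := PrimeSpectrum.comap (S.toStalk x) p with hq
  have hasy : q.asIdeal = Ideal.comap (S.toStalk y) p'.asIdeal := congrArg PrimeSpectrum.asIdeal h
  letI κq := IsLocalRing.ResidueField (Localization.AtPrime q.asIdeal)
  letI κp := IsLocalRing.ResidueField (Localization.AtPrime p.asIdeal)
  letI κp' := IsLocalRing.ResidueField (Localization.AtPrime p'.asIdeal)
  set ρq : S.Gamma Set.univ →+* κq := (IsLocalRing.residue _).comp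
    (algebraMap _ (Localization.AtPrime q.asIdeal)) with hρq
  set ρp : S.O x →+* κp := (IsLocalRing.residue _).comp
    (algebraMap _ (Localization.AtPrime p.asIdeal)) with hρp
  set ρp' : S.O y →+* κp' := (IsLocalRing.residue _).comp
    (algebraMap _ (Localization.AtPrime p'.asIdeal)) with hρp'
  set ℓ1 := Localization.localRingHom q.asIdeal p.asIdeal (S.toStalk x) rfl with hℓ1
  set ℓ2 := Localization.localRingHom q.asIdeal p'.asIdeal (S.toStalk y) hasy with hℓ2
  haveI := Localization.isLocalHom_localRingHom q.asIdeal p.asIdeal (S.toStalk x) rfl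
  haveI := Localization.isLocalHom_localRingHom q.asIdeal p'.asIdeal (S.toStalk y) hasy
  letI : Algebra κq κp := (IsLocalRing.ResidueField.map ℓ1).toAlgebra
  letI : Algebra κq κp' := (IsLocalRing.ResidueField.map ℓ2).toAlgebra
  haveI hfree : Module.Free κq κp' := Module.Free.of_divisionRing κq κp'
  haveI hffκ : Module.FaithfullyFlat κq κp' := inferInstance
  haveI : Nontrivial (κp ⊗[κq] κp') := Module.FaithfullyFlat.rTensor_nontrivial κq κp' κp
  obtain ⟨m, hm⟩ := Ideal.exists_maximal (κp ⊗[κq] κp')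
  haveI := hm.isPrime
  set χ₁ : S.O x →+* κp ⊗[κq] κp' :=
    (Algebra.TensorProduct.includeLeftRingHom).comp ρp with hχ₁
  set χ₂ : S.O y →+* κp ⊗[κq] κp' :=
    ((Algebra.TensorProduct.includeRight : κp' →ₐ[κq] κp ⊗[κq] κp') : κp' →+* _).comp ρp'
    with hχ₂
  have key1 : χ₁.comp (S.toStalk x) = χ₂.comp (S.toStalk y) := by
    ext s
    have e1 : ρp (S.toStalk x s) = IsLocalRing.ResidueField.map ℓ1 (ρq s) := by
      show _ = IsLocalRing.ResidueField.map ℓ1 (IsLocalRing.residue _ _)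
      rw [IsLocalRing.ResidueField.map_residue]
      exact congrArg (IsLocalRing.residue _)
        (Localization.localRingHom_to_map q.asIdeal p.asIdeal (S.toStalk x) rfl s).symm
    have e2 : ρp' (S.toStalk y s) = IsLocalRing.ResidueField.map ℓ2 (ρq s) := by
      show _ = IsLocalRing.ResidueField.map ℓ2 (IsLocalRing.residue _ _)
      rw [IsLocalRing.ResidueField.map_residue, Localization.localRingHom_to_map]
      rfl
    show Algebra.TensorProduct.includeLeftRingHom (ρp (S.toStalk x s))
        = (Algebra.TensorProduct.includeRight : κp' →ₐ[κq] κp ⊗[κq] κp') (ρp' (S.toStalk y s))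
    rw [e1, e2]
    have c1 : (Algebra.TensorProduct.includeLeftRingHom : κp →+* κp ⊗[κq] κp')
        (algebraMap κq κp (ρq s)) = algebraMap κq (κp ⊗[κq] κp') (ρq s) :=
      (Algebra.TensorProduct.includeLeft : κp →ₐ[κq] κp ⊗[κq] κp').commutes (ρq s)
    have c2 : (Algebra.TensorProduct.includeRight : κp' →ₐ[κq] κp ⊗[κq] κp')
        (algebraMap κq κp' (ρq s)) = algebraMap κq (κp ⊗[κq] κp') (ρq s) :=
      Algebra.TensorProduct.includeRight.commutes (ρq s)
    exact c1.trans c2.symm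
  letI : Algebra (S.Gamma Set.univ) (κp ⊗[κq] κp') := (χ₁.comp (S.toStalk x)).toAlgebra
  set φ₁ : S.O x →ₐ[S.Gamma Set.univ] κp ⊗[κq] κp' :=
    { toRingHom := χ₁, commutes' := fun _ => rfl } with hφ₁
  set φ₂ : S.O y →ₐ[S.Gamma Set.univ] κp ⊗[κq] κp' :=
    { toRingHom := χ₂, commutes' := fun s => (RingHom.congr_fun key1 s).symm } with hφ₂
  set Θ := Algebra.TensorProduct.productMap φ₁ φ₂ with hΘ
  set P₀ : Ideal ((S.O x) ⊗[S.Gamma Set.univ] (S.O y)) := Ideal.comap Θ.toRingHom m with hP₀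
  haveI : P₀.IsPrime := Ideal.IsPrime.comap _
  have hP₀x : Ideal.comap (Algebra.TensorProduct.includeLeft :
      S.O x →ₐ[S.Gamma Set.univ] _).toRingHom P₀ = p.asIdeal := by
    rw [hP₀, Ideal.comap_comap]
    have hcmp : Θ.toRingHom.comp (Algebra.TensorProduct.includeLeft :
        S.O x →ₐ[S.Gamma Set.univ] _).toRingHom = χ₁ := by
      ext a
      exact Algebra.TensorProduct.productMap_left_apply φ₁ φ₂ a
    rw [hcmp, hχ₁, ← Ideal.comap_comap]
    haveI : (Ideal.comap (Algebra.TensorProduct.includeLeftRingHom :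
        κp →+* κp ⊗[κq] κp') m).IsPrime := Ideal.IsPrime.comap _
    rw [Ideal.eq_bot_of_prime (Ideal.comap (Algebra.TensorProduct.includeLeftRingHom :
        κp →+* κp ⊗[κq] κp') m)]
    exact ker_residue_comp _ p.asIdeal
  have hP₀y : Ideal.comap (Algebra.TensorProduct.includeRight :
      S.O y →ₐ[S.Gamma Set.univ] _).toRingHom P₀ = p'.asIdeal := by
    rw [hP₀, Ideal.comap_comap]
    have hcmp : Θ.toRingHom.comp (Algebra.TensorProduct.includeRight :
        S.O y →ₐ[S.Gamma Set.univ] _).toRingHom = χ₂ := by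
      ext b
      exact Algebra.TensorProduct.productMap_right_apply φ₁ φ₂ b
    rw [hcmp, hχ₂, ← Ideal.comap_comap]
    haveI : (Ideal.comap ((Algebra.TensorProduct.includeRight : κp' →ₐ[κq] κp ⊗[κq] κp') :
        κp' →+* κp ⊗[κq] κp') m).IsPrime := Ideal.IsPrime.comap _
    rw [Ideal.eq_bot_of_prime (Ideal.comap ((Algebra.TensorProduct.includeRight :
        κp' →ₐ[κq] κp ⊗[κq] κp') : κp' →+* κp ⊗[κq] κp') m)]
    exact ker_residue_comp _ p'.asIdeal
  -- move over to Γ(U_x ∩ U_y) via ψ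
  set ψ := (S.psi x y).toRingHom with hψdef
  have hψb := S.psi_bijective hS x y
  set E := RingEquiv.ofBijective ψ hψb with hE
  set P₁ : Ideal (S.Gamma (Set.Ici x ∩ Set.Ici y)) := Ideal.comap E.symm.toRingHom P₀ with hP₁
  haveI : P₁.IsPrime := Ideal.IsPrime.comap _
  have hψP₁ : Ideal.comap ψ P₁ = P₀ := by
    rw [hP₁, Ideal.comap_comap]
    have hid : E.symm.toRingHom.comp ψ = RingHom.id _ := by
      refine RingHom.ext fun t => ?_
      exact E.symm_apply_apply t
    rw [hid, Ideal.comap_id]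
  obtain ⟨Q, hQ⟩ := exists_comap_eq_of_faithfullyFlat
    (S.sectToProd (Set.Ici x ∩ Set.Ici y)) (hS.2.2 x y) ⟨P₁, inferInstance⟩
  obtain ⟨z, r, hr⟩ := pi_prime_exists _ Q
  have hQ' : Ideal.comap (S.sectToProd (Set.Ici x ∩ Set.Ici y)) Q.asIdeal = P₁ :=
    congrArg PrimeSpectrum.asIdeal hQ
  have hr' : Ideal.comap (Pi.evalRingHom (fun w : ↥(Set.Ici x ∩ Set.Ici y) => S.O w.1) z) r.asIdeal = Q.asIdeal :=
    congrArg PrimeSpectrum.asIdeal hr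
  refine ⟨z.1, z.2.1, z.2.2, r, ?_, ?_⟩
  · apply PrimeSpectrum.ext
    show Ideal.comap (S.res z.2.1) r.asIdeal = p.asIdeal
    have hres : S.res z.2.1 = (((Pi.evalRingHom (fun w : ↥(Set.Ici x ∩ Set.Ici y) => S.O w.1) z).comp
        (S.sectToProd (Set.Ici x ∩ Set.Ici y))).comp
        (S.stalkSect (Set.inter_subset_left : Set.Ici x ∩ Set.Ici y ⊆ Set.Ici x))) := by
      ext a; rfl
    rw [hres, ← Ideal.comap_comap, ← Ideal.comap_comap, hr', hQ']
    have hstalk : (S.stalkSect (Set.inter_subset_left : Set.Ici x ∩ Set.Ici y ⊆ Set.Ici x))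
        = ψ.comp (Algebra.TensorProduct.includeLeft :
            S.O x →ₐ[S.Gamma Set.univ] _).toRingHom := by
      apply RingHom.ext
      intro a
      show S.stalkSect _ a = (S.psi x y).toRingHom
        ((Algebra.TensorProduct.includeLeft : S.O x →ₐ[S.Gamma Set.univ] _).toRingHom a)
      exact (Algebra.TensorProduct.productMap_left_apply
        (S.stalkSectAlg x Set.inter_subset_left) (S.stalkSectAlg y Set.inter_subset_right) a).symm
    rw [hstalk, ← Ideal.comap_comap, hψP₁, hP₀x]
  · apply PrimeSpectrum.ext
    show Ideal.comap (S.res z.2.2) r.asIdeal = p'.asIdeal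
    have hres : S.res z.2.2 = (((Pi.evalRingHom (fun w : ↥(Set.Ici x ∩ Set.Ici y) => S.O w.1) z).comp
        (S.sectToProd (Set.Ici x ∩ Set.Ici y))).comp
        (S.stalkSect (Set.inter_subset_right : Set.Ici x ∩ Set.Ici y ⊆ Set.Ici y))) := by
      ext a; rfl
    rw [hres, ← Ideal.comap_comap, ← Ideal.comap_comap, hr', hQ']
    have hstalk : (S.stalkSect (Set.inter_subset_right : Set.Ici x ∩ Set.Ici y ⊆ Set.Ici y))
        = ψ.comp (Algebra.TensorProduct.includeRight :
            S.O y →ₐ[S.Gamma Set.univ] _).toRingHom := by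
      apply RingHom.ext
      intro b
      show S.stalkSect _ b = (S.psi x y).toRingHom
        ((Algebra.TensorProduct.includeRight : S.O y →ₐ[S.Gamma Set.univ] _).toRingHom b)
      exact (Algebra.TensorProduct.productMap_right_apply
        (S.stalkSectAlg x Set.inter_subset_left) (S.stalkSectAlg y Set.inter_subset_right) b).symm
    rw [hstalk, ← Ideal.comap_comap, hψP₁, hP₀y]

end FRS


namespace FRS
variable (S : FRS)

/-- For an affine finite space `X`, the ringed space
`Spec O_X = colim_{x ∈ X} Spec O_x` is the affine scheme `Spec O(X)`: the canonical comparison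
map is a homeomorphism, and on structure sheaves it induces isomorphisms on all stalks, i.e.
for every prime `p` of `O_x` the natural map `O(X)_{p ∩ O(X)} → (O_x)_p` is an isomorphism. -/
theorem specColim_eq_spec (hS : S.IsAffine) :
    IsHomeomorph S.specToSpecGlobal ∧
    (∀ (x : S.X) (p : PrimeSpectrum (S.O x)),
      Function.Bijective
        (Localization.localRingHom (Ideal.comap (S.toStalk x) p.asIdeal) p.asIdeal
          (S.toStalk x) rfl)) := by
    classical
    constructor
    · -- the comparison map is a homeomorphism
      have hcont : Continuous S.specToSpecGlobal :=
        continuous_quot_lift _ (continuous_sigma fun x =>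
          PrimeSpectrum.continuous_comap (S.toStalk x))
      have hsurj : Function.Surjective S.specToSpecGlobal := by
        intro q
        obtain ⟨x, p, hp⟩ := S.exists_point hS q
        exact ⟨Quot.mk _ ⟨x, p⟩, hp⟩
      have hinj : Function.Injective S.specToSpecGlobal := by
        intro a b
        induction a using Quot.ind with | _ a =>
        induction b using Quot.ind with | _ b =>
        intro hab
        obtain ⟨z, hxz, hyz, r, hr1, hr2⟩ := S.zigzag hS a.2 b.2 hab
        have e1 : Quot.mk S.specRel ⟨a.1, a.2⟩ = Quot.mk S.specRel ⟨z, r⟩ :=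
          Quot.sound ⟨hxz, hr1⟩
        have e2 : Quot.mk S.specRel ⟨b.1, b.2⟩ = Quot.mk S.specRel ⟨z, r⟩ :=
          Quot.sound ⟨hyz, hr2⟩
        show Quot.mk S.specRel a = Quot.mk S.specRel b
        rw [show a = (⟨a.1, a.2⟩ : Σ x : S.X, PrimeSpectrum (S.O x)) from rfl,
          show b = (⟨b.1, b.2⟩ : Σ x : S.X, PrimeSpectrum (S.O x)) from rfl, e1, e2]
      have hopen : IsOpenMap S.specToSpecGlobal := by
        intro U hU
        set V : Set (Σ x : S.X, PrimeSpectrum (S.O x)) := Quot.mk S.specRel ⁻¹' U with hV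
        have hVopen : IsOpen V := hU.preimage continuous_quot_mk
        have hsat : ∀ {x y : S.X} (p : PrimeSpectrum (S.O x)) (p' : PrimeSpectrum (S.O y)),
            PrimeSpectrum.comap (S.toStalk x) p = PrimeSpectrum.comap (S.toStalk y) p' →
            ((⟨x, p⟩ : Σ x : S.X, PrimeSpectrum (S.O x)) ∈ V ↔
              (⟨y, p'⟩ : Σ x : S.X, PrimeSpectrum (S.O x)) ∈ V) := by
          intro x y p p' hpq
          obtain ⟨z, hxz, hyz, r, hr1, hr2⟩ := S.zigzag hS p p' hpq
          have e1 : Quot.mk S.specRel ⟨x, p⟩ = Quot.mk S.specRel ⟨z, r⟩ := Quot.sound ⟨hxz, hr1⟩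
          have e2 : Quot.mk S.specRel ⟨y, p'⟩ = Quot.mk S.specRel ⟨z, r⟩ := Quot.sound ⟨hyz, hr2⟩
          show Quot.mk S.specRel ⟨x, p⟩ ∈ U ↔ Quot.mk S.specRel ⟨y, p'⟩ ∈ U
          rw [e1, e2]
        set Z : Set (PrimeSpectrum (∀ x, S.O x)) :=
          ⋃ x : S.X, PrimeSpectrum.comap (Pi.evalRingHom S.O x) ''
            {p : PrimeSpectrum (S.O x) |
              (⟨x, p⟩ : Σ x : S.X, PrimeSpectrum (S.O x)) ∉ V} with hZ
        have hZclosed : IsClosed Z := by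
          apply isClosed_iUnion_of_finite
          intro x
          apply (PrimeSpectrum.isClosedEmbedding_comap_of_surjective _ _
            (Function.surjective_eval x)).isClosedMap
          have hEq : {p : PrimeSpectrum (S.O x) |
              (⟨x, p⟩ : Σ x : S.X, PrimeSpectrum (S.O x)) ∉ V} = (Sigma.mk x ⁻¹' V)ᶜ := rfl
          rw [hEq]
          exact (hVopen.preimage continuous_sigmaMk).isClosed_compl
        have hmemW : ∀ q : PrimeSpectrum (S.Gamma Set.univ),
            q ∈ PrimeSpectrum.comap S.toProd '' Z ↔
              ∃ (x : S.X) (p : PrimeSpectrum (S.O x)),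
                PrimeSpectrum.comap (S.toStalk x) p = q ∧
                  (⟨x, p⟩ : Σ x : S.X, PrimeSpectrum (S.O x)) ∉ V := by
          intro q
          constructor
          · rintro ⟨P, hP, rfl⟩
            rw [hZ] at hP
            obtain ⟨x, hx⟩ := Set.mem_iUnion.mp hP
            obtain ⟨p, hp, rfl⟩ := hx
            exact ⟨x, p, by rw [toStalk_eq, PrimeSpectrum.comap_comp_apply], hp⟩
          · rintro ⟨x, p, hc, hp⟩
            refine ⟨PrimeSpectrum.comap (Pi.evalRingHom S.O x) p,
              Set.mem_iUnion.mpr ⟨x, ⟨p, hp, rfl⟩⟩, ?_⟩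
            rw [← hc, toStalk_eq, PrimeSpectrum.comap_comp_apply]
        have hdisj : ∀ q, q ∈ PrimeSpectrum.comap S.toProd '' Z →
            q ∈ S.specToSpecGlobal '' U → False := by
          rintro q hqW ⟨u, huU, rfl⟩
          obtain ⟨a, rfl⟩ := Quot.exists_rep u
          obtain ⟨x, p, hc, hp⟩ := (hmemW _).mp hqW
          have haV : a ∈ V := huU
          have haV' : (⟨a.1, a.2⟩ : Σ x : S.X, PrimeSpectrum (S.O x)) ∈ V := haV
          exact hp ((hsat p a.2 hc).mpr haV')
        have hWclosed : IsClosed (PrimeSpectrum.comap S.toProd '' Z) := by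
          apply PrimeSpectrum.isClosed_image_of_stableUnderSpecialization S.toProd Z hZclosed
          intro q q' hspec hq
          have hle : q ≤ q' := (PrimeSpectrum.le_iff_specializes q q').mpr hspec
          obtain ⟨x, p, hc, hp⟩ := (hmemW q).mp hq
          obtain ⟨y, p'', hc'⟩ := S.exists_point hS q'
          rw [hmemW]
          by_cases hyV : (⟨y, p''⟩ : Σ x : S.X, PrimeSpectrum (S.O x)) ∈ V
          · exfalso
            haveI := S.flat_toStalk hS y
            have hle' : q.asIdeal ≤ Ideal.comap (algebraMap (S.Gamma Set.univ) (S.O y))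
                p''.asIdeal := by
              have h1 : q.asIdeal ≤ q'.asIdeal := hle
              have h2 : q'.asIdeal = Ideal.comap (S.toStalk y) p''.asIdeal :=
                (congrArg PrimeSpectrum.asIdeal hc').symm
              rw [h2] at h1
              exact h1
            obtain ⟨p₂, hp₂le, hp₂⟩ := exists_le_comap_eq_of_flat p'' q hle'
            have hp₂V : (⟨y, p₂⟩ : Σ x : S.X, PrimeSpectrum (S.O x)) ∈ V := by
              have hgen : p₂ ⤳ p'' := (PrimeSpectrum.le_iff_specializes p₂ p'').mp hp₂le
              have hVyopen : IsOpen (Sigma.mk y ⁻¹' V) := hVopen.preimage continuous_sigmaMk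
              exact hVyopen.stableUnderGeneralization hgen hyV
            exact hp ((hsat p p₂ (hc.trans hp₂.symm)).mpr hp₂V)
          · exact ⟨y, p'', hc', hyV⟩
        have himg : S.specToSpecGlobal '' U = (PrimeSpectrum.comap S.toProd '' Z)ᶜ := by
          ext q
          constructor
          · intro hq hqW
            exact hdisj q hqW hq
          · intro hq
            obtain ⟨x, p, hp⟩ := S.exists_point hS q
            by_cases hxV : (⟨x, p⟩ : Σ x : S.X, PrimeSpectrum (S.O x)) ∈ V
            · exact ⟨Quot.mk _ ⟨x, p⟩, hxV, hp⟩
            · exact absurd ((hmemW q).mpr ⟨x, p, hp, hxV⟩) hq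
        rw [himg]
        exact hWclosed.isOpen_compl
      exact ⟨hcont, hopen, hinj, hsurj⟩
    · intro x p
      haveI := S.flat_toStalk hS x
      exact flat_epi_localization_bijective (S.tmul_comm hS x) p

end FRS
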